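/- For all density operators ρ, σ on ℂ² (2×2 positive semidefinite matrices of trace 1), one has (2 + tr[ρσ]) · tr[R_{4,H}(ρ ⊗ σ ⊗ ρ ⊗ σ)] ≤ 18/5, with equality exactly when ρ = σ is a pure state. -/

import Mathlib

open Matrix BigOperators
open scoped ComplexOrder

noncomputable section

abbrev QIdx (n : ℕ) := Fin n → Fin 2

def IsDensity {ι : Type*} [Fintype ι] [DecidableEq ι] (ρ : Matrix ι ι ℂ) : Prop :=
  ρ.PosSemidef ∧ ρ.trace = 1

/-- The operator on `(ℂ²)^{⊗k}` permuting the `k` tensor factors according to `π`. -/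
def permOp {k : ℕ} (π : Equiv.Perm (Fin k)) : Matrix (Fin k → Fin 2) (Fin k → Fin 2) ℂ :=
  fun a b => if ∀ i, b i = a (π i) then 1 else 0

def pauliX : Matrix (Fin 2) (Fin 2) ℂ := !![0, 1; 1, 0]
def pauliY : Matrix (Fin 2) (Fin 2) ℂ := !![0, -Complex.I; Complex.I, 0]
def pauliZ : Matrix (Fin 2) (Fin 2) ℂ := !![1, 0; 0, -1]

/-- `P^{⊗k}` on `(ℂ²)^{⊗k}`. -/
def pauliPow (k : ℕ) (P : Matrix (Fin 2) (Fin 2) ℂ) :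
    Matrix (Fin k → Fin 2) (Fin k → Fin 2) ℂ :=
  fun a b => ∏ i, P (a i) (b i)

/-- The single-qubit Clifford fourth-moment operator `R_{4,Cl}` on `(ℂ²)^{⊗4}`. -/
def R4Cl : Matrix (Fin 4 → Fin 2) (Fin 4 → Fin 2) ℂ :=
  -1 + ((1 : ℂ)/2) • (permOp (Equiv.swap 0 1) + permOp (Equiv.swap 2 3))
    + ((3 : ℂ)/4) • (1 + pauliPow 4 pauliX + pauliPow 4 pauliY + pauliPow 4 pauliZ)

/-- The single-qubit Haar fourth-moment operator `R_{4,H}` on `(ℂ²)^{⊗4}`. -/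
def R4H : Matrix (Fin 4 → Fin 2) (Fin 4 → Fin 2) ℂ :=
  ((1 : ℂ)/5) • (1 + permOp (Equiv.swap 0 1) + permOp (Equiv.swap 2 3))
  + ((3 : ℂ)/5) • (permOp (Equiv.swap 0 1 * Equiv.swap 2 3)
      + permOp (Equiv.swap 0 2 * Equiv.swap 1 3)
      + permOp (Equiv.swap 0 3 * Equiv.swap 1 2))
  - ((3 : ℂ)/10) • (permOp (Equiv.swap 0 2) + permOp (Equiv.swap 1 3)
      + permOp (Equiv.swap 0 3) + permOp (Equiv.swap 1 2))

/-- Per-qubit `n`-fold tensor power of an operator on `(ℂ²)^{⊗k}` (k replicas),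
acting on `k` copies of `(ℂ²)^{⊗n}`. -/
def repPow (n : ℕ) {k : ℕ} (R : Matrix (Fin k → Fin 2) (Fin k → Fin 2) ℂ) :
    Matrix (Fin k → QIdx n) (Fin k → QIdx n) ℂ :=
  fun a b => ∏ ℓ : Fin n, R (fun r => a r ℓ) (fun r => b r ℓ)

/-- The four-replica state `ρ ⊗ σ ⊗ ρ ⊗ σ`. -/
def rep4 {n : ℕ} (ρ σ : Matrix (QIdx n) (QIdx n) ℂ) :
    Matrix (Fin 4 → QIdx n) (Fin 4 → QIdx n) ℂ :=
  fun a b => ρ (a 0) (b 0) * σ (a 1) (b 1) * ρ (a 2) (b 2) * σ (a 3) (b 3)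

/-- The pure state `|ψ⟩⟨ψ|`. -/
def pureState {ι : Type*} (ψ : ι → ℂ) : Matrix ι ι ℂ :=
  fun a b => ψ a * star (ψ b)


/-- The four-replica single-qubit state `ρ ⊗ σ ⊗ ρ ⊗ σ` on `(ℂ²)^{⊗4}`. -/
def rep41 (ρ σ : Matrix (Fin 2) (Fin 2) ℂ) :
    Matrix (Fin 4 → Fin 2) (Fin 4 → Fin 2) ℂ :=
  fun a b => ρ (a 0) (b 0) * σ (a 1) (b 1) * ρ (a 2) (b 2) * σ (a 3) (b 3)



-- Auxiliary lemmas
def e4 : (Fin 2 × Fin 2 × Fin 2 × Fin 2) ≃ (Fin 4 → Fin 2) where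
  toFun x := ![x.1, x.2.1, x.2.2.1, x.2.2.2]
  invFun f := (f 0, f 1, f 2, f 3)
  left_inv x := rfl
  right_inv f := by funext i; fin_cases i <;> rfl

lemma sum_fun4 (h : Fin 2 → Fin 2 → Fin 2 → Fin 2 → ℂ) :
    ∑ a : Fin 4 → Fin 2, h (a 0) (a 1) (a 2) (a 3)
      = ∑ i : Fin 2, ∑ j : Fin 2, ∑ k : Fin 2, ∑ l : Fin 2, h i j k l := by
  rw [← Equiv.sum_comp e4 (fun a => h (a 0) (a 1) (a 2) (a 3)), Fintype.sum_prod_type]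
  refine Finset.sum_congr rfl fun i _ => ?_
  rw [Fintype.sum_prod_type]
  refine Finset.sum_congr rfl fun j _ => ?_
  rw [Fintype.sum_prod_type]
  rfl

lemma trace_permOp_rep41 (π : Equiv.Perm (Fin 4)) (ρ σ : Matrix (Fin 2) (Fin 2) ℂ) :
    Matrix.trace (permOp π * rep41 ρ σ) =
      ∑ a : Fin 4 → Fin 2,
        ρ (a (π 0)) (a 0) * σ (a (π 1)) (a 1) * ρ (a (π 2)) (a 2) * σ (a (π 3)) (a 3) := by
  unfold Matrix.trace
  refine Finset.sum_congr rfl fun a _ => ?_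
  rw [Matrix.diag, Matrix.mul_apply]
  have : ∀ b : Fin 4 → Fin 2, permOp π a b = if b = fun i => a (π i) then 1 else 0 := by
    intro b; unfold permOp; congr 1; simp [funext_iff]
  simp only [this, ite_mul, one_mul, zero_mul, Finset.sum_ite_eq' Finset.univ]
  simp [rep41]

lemma trace_mul_fin_two (ρ σ : Matrix (Fin 2) (Fin 2) ℂ) :
    Matrix.trace (ρ * σ) =
      ρ 0 0 * σ 0 0 + ρ 0 1 * σ 1 0 + ρ 1 0 * σ 0 1 + ρ 1 1 * σ 1 1 := by
  simp only [Matrix.trace_fin_two, Matrix.mul_apply, Fin.sum_univ_two]; ring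

lemma trace_rep41 (ρ σ : Matrix (Fin 2) (Fin 2) ℂ) :
    Matrix.trace (rep41 ρ σ) = (Matrix.trace ρ)^2 * (Matrix.trace σ)^2 := by
  unfold Matrix.trace
  simp only [Matrix.diag, rep41]
  rw [sum_fun4 (fun i j k l => ρ i i * σ j j * ρ k k * σ l l)]
  simp only [Matrix.trace_fin_two, Fin.sum_univ_two]
  ring

section perms
variable (ρ σ : Matrix (Fin 2) (Fin 2) ℂ)

lemma tr_s01 : Matrix.trace (permOp (Equiv.swap 0 1) * rep41 ρ σ) =
    Matrix.trace (ρ*σ) * Matrix.trace ρ * Matrix.trace σ := by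
  rw [trace_permOp_rep41]
  have h0 : ((Equiv.swap 0 1 : Equiv.Perm (Fin 4)) 0) = 1 := by decide
  have h1 : ((Equiv.swap 0 1 : Equiv.Perm (Fin 4)) 1) = 0 := by decide
  have h2 : ((Equiv.swap 0 1 : Equiv.Perm (Fin 4)) 2) = 2 := by decide
  have h3 : ((Equiv.swap 0 1 : Equiv.Perm (Fin 4)) 3) = 3 := by decide
  simp only [h0, h1, h2, h3]
  rw [sum_fun4 (fun i j k l => ρ j i * σ i j * ρ k k * σ l l)]
  simp only [Matrix.trace_fin_two, trace_mul_fin_two, Matrix.mul_apply, Fin.sum_univ_two]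
  ring

lemma tr_s23 : Matrix.trace (permOp (Equiv.swap 2 3) * rep41 ρ σ) =
    Matrix.trace (ρ*σ) * Matrix.trace ρ * Matrix.trace σ := by
  rw [trace_permOp_rep41]
  have h0 : ((Equiv.swap 2 3 : Equiv.Perm (Fin 4)) 0) = 0 := by decide
  have h1 : ((Equiv.swap 2 3 : Equiv.Perm (Fin 4)) 1) = 1 := by decide
  have h2 : ((Equiv.swap 2 3 : Equiv.Perm (Fin 4)) 2) = 3 := by decide
  have h3 : ((Equiv.swap 2 3 : Equiv.Perm (Fin 4)) 3) = 2 := by decide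
  simp only [h0, h1, h2, h3]
  rw [sum_fun4 (fun i j k l => ρ i i * σ j j * ρ l k * σ k l)]
  simp only [Matrix.trace_fin_two, trace_mul_fin_two, Matrix.mul_apply, Fin.sum_univ_two]
  ring

lemma tr_m0123 : Matrix.trace (permOp (Equiv.swap 0 1 * Equiv.swap 2 3) * rep41 ρ σ) =
    Matrix.trace (ρ*σ)^2 := by
  rw [trace_permOp_rep41]
  have h0 : ((Equiv.swap 0 1 * Equiv.swap 2 3 : Equiv.Perm (Fin 4)) 0) = 1 := by decide
  have h1 : ((Equiv.swap 0 1 * Equiv.swap 2 3 : Equiv.Perm (Fin 4)) 1) = 0 := by decide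
  have h2 : ((Equiv.swap 0 1 * Equiv.swap 2 3 : Equiv.Perm (Fin 4)) 2) = 3 := by decide
  have h3 : ((Equiv.swap 0 1 * Equiv.swap 2 3 : Equiv.Perm (Fin 4)) 3) = 2 := by decide
  simp only [h0, h1, h2, h3]
  rw [sum_fun4 (fun i j k l => ρ j i * σ i j * ρ l k * σ k l)]
  simp only [trace_mul_fin_two, Matrix.mul_apply, Fin.sum_univ_two]
  ring

lemma tr_m0213 : Matrix.trace (permOp (Equiv.swap 0 2 * Equiv.swap 1 3) * rep41 ρ σ) =
    Matrix.trace (ρ*ρ) * Matrix.trace (σ*σ) := by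
  rw [trace_permOp_rep41]
  have h0 : ((Equiv.swap 0 2 * Equiv.swap 1 3 : Equiv.Perm (Fin 4)) 0) = 2 := by decide
  have h1 : ((Equiv.swap 0 2 * Equiv.swap 1 3 : Equiv.Perm (Fin 4)) 1) = 3 := by decide
  have h2 : ((Equiv.swap 0 2 * Equiv.swap 1 3 : Equiv.Perm (Fin 4)) 2) = 0 := by decide
  have h3 : ((Equiv.swap 0 2 * Equiv.swap 1 3 : Equiv.Perm (Fin 4)) 3) = 1 := by decide
  simp only [h0, h1, h2, h3]
  rw [sum_fun4 (fun i j k l => ρ k i * σ l j * ρ i k * σ j l)]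
  simp only [trace_mul_fin_two, Matrix.mul_apply, Fin.sum_univ_two]
  ring

lemma tr_m0312 : Matrix.trace (permOp (Equiv.swap 0 3 * Equiv.swap 1 2) * rep41 ρ σ) =
    Matrix.trace (ρ*σ)^2 := by
  rw [trace_permOp_rep41]
  have h0 : ((Equiv.swap 0 3 * Equiv.swap 1 2 : Equiv.Perm (Fin 4)) 0) = 3 := by decide
  have h1 : ((Equiv.swap 0 3 * Equiv.swap 1 2 : Equiv.Perm (Fin 4)) 1) = 2 := by decide
  have h2 : ((Equiv.swap 0 3 * Equiv.swap 1 2 : Equiv.Perm (Fin 4)) 2) = 1 := by decide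
  have h3 : ((Equiv.swap 0 3 * Equiv.swap 1 2 : Equiv.Perm (Fin 4)) 3) = 0 := by decide
  simp only [h0, h1, h2, h3]
  rw [sum_fun4 (fun i j k l => ρ l i * σ k j * ρ j k * σ i l)]
  simp only [trace_mul_fin_two, Matrix.mul_apply, Fin.sum_univ_two]
  ring

lemma tr_s02 : Matrix.trace (permOp (Equiv.swap 0 2) * rep41 ρ σ) =
    Matrix.trace (ρ*ρ) * Matrix.trace σ ^ 2 := by
  rw [trace_permOp_rep41]
  have h0 : ((Equiv.swap 0 2 : Equiv.Perm (Fin 4)) 0) = 2 := by decide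
  have h1 : ((Equiv.swap 0 2 : Equiv.Perm (Fin 4)) 1) = 1 := by decide
  have h2 : ((Equiv.swap 0 2 : Equiv.Perm (Fin 4)) 2) = 0 := by decide
  have h3 : ((Equiv.swap 0 2 : Equiv.Perm (Fin 4)) 3) = 3 := by decide
  simp only [h0, h1, h2, h3]
  rw [sum_fun4 (fun i j k l => ρ k i * σ j j * ρ i k * σ l l)]
  simp only [Matrix.trace_fin_two, trace_mul_fin_two, Matrix.mul_apply, Fin.sum_univ_two]
  ring

lemma tr_s13 : Matrix.trace (permOp (Equiv.swap 1 3) * rep41 ρ σ) =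
    Matrix.trace (σ*σ) * Matrix.trace ρ ^ 2 := by
  rw [trace_permOp_rep41]
  have h0 : ((Equiv.swap 1 3 : Equiv.Perm (Fin 4)) 0) = 0 := by decide
  have h1 : ((Equiv.swap 1 3 : Equiv.Perm (Fin 4)) 1) = 3 := by decide
  have h2 : ((Equiv.swap 1 3 : Equiv.Perm (Fin 4)) 2) = 2 := by decide
  have h3 : ((Equiv.swap 1 3 : Equiv.Perm (Fin 4)) 3) = 1 := by decide
  simp only [h0, h1, h2, h3]
  rw [sum_fun4 (fun i j k l => ρ i i * σ l j * ρ k k * σ j l)]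
  simp only [Matrix.trace_fin_two, trace_mul_fin_two, Matrix.mul_apply, Fin.sum_univ_two]
  ring

lemma tr_s03 : Matrix.trace (permOp (Equiv.swap 0 3) * rep41 ρ σ) =
    Matrix.trace (ρ*σ) * Matrix.trace ρ * Matrix.trace σ := by
  rw [trace_permOp_rep41]
  have h0 : ((Equiv.swap 0 3 : Equiv.Perm (Fin 4)) 0) = 3 := by decide
  have h1 : ((Equiv.swap 0 3 : Equiv.Perm (Fin 4)) 1) = 1 := by decide
  have h2 : ((Equiv.swap 0 3 : Equiv.Perm (Fin 4)) 2) = 2 := by decide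
  have h3 : ((Equiv.swap 0 3 : Equiv.Perm (Fin 4)) 3) = 0 := by decide
  simp only [h0, h1, h2, h3]
  rw [sum_fun4 (fun i j k l => ρ l i * σ j j * ρ k k * σ i l)]
  simp only [Matrix.trace_fin_two, trace_mul_fin_two, Matrix.mul_apply, Fin.sum_univ_two]
  ring

lemma tr_s12 : Matrix.trace (permOp (Equiv.swap 1 2) * rep41 ρ σ) =
    Matrix.trace (ρ*σ) * Matrix.trace ρ * Matrix.trace σ := by
  rw [trace_permOp_rep41]
  have h0 : ((Equiv.swap 1 2 : Equiv.Perm (Fin 4)) 0) = 0 := by decide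
  have h1 : ((Equiv.swap 1 2 : Equiv.Perm (Fin 4)) 1) = 2 := by decide
  have h2 : ((Equiv.swap 1 2 : Equiv.Perm (Fin 4)) 2) = 1 := by decide
  have h3 : ((Equiv.swap 1 2 : Equiv.Perm (Fin 4)) 3) = 3 := by decide
  simp only [h0, h1, h2, h3]
  rw [sum_fun4 (fun i j k l => ρ i i * σ k j * ρ j k * σ l l)]
  simp only [Matrix.trace_fin_two, trace_mul_fin_two, Matrix.mul_apply, Fin.sum_univ_two]
  ring

end perms

lemma key_trace (ρ σ : Matrix (Fin 2) (Fin 2) ℂ) :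
    Matrix.trace (R4H * rep41 ρ σ) =
      (1/5) * ((Matrix.trace ρ)^2 * (Matrix.trace σ)^2
          + 2 * Matrix.trace (ρ*σ) * Matrix.trace ρ * Matrix.trace σ)
      + (3/5) * (2 * Matrix.trace (ρ*σ)^2 + Matrix.trace (ρ*ρ) * Matrix.trace (σ*σ))
      - (3/10) * (Matrix.trace (ρ*ρ) * (Matrix.trace σ)^2
          + Matrix.trace (σ*σ) * (Matrix.trace ρ)^2
          + 2 * Matrix.trace (ρ*σ) * Matrix.trace ρ * Matrix.trace σ) := by
  simp only [R4H, add_mul, sub_mul, smul_mul_assoc, one_mul, Matrix.trace_add,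
    Matrix.trace_sub, Matrix.trace_smul, smul_eq_mul]
  rw [trace_rep41, tr_s01, tr_s23, tr_m0123, tr_m0213, tr_m0312, tr_s02, tr_s13, tr_s03, tr_s12]
  ring

lemma density_entries (ρ : Matrix (Fin 2) (Fin 2) ℂ) (h : IsDensity ρ) :
    ρ 0 0 = ((ρ 0 0).re : ℂ) ∧ ρ 1 1 = ((1 - (ρ 0 0).re : ℝ) : ℂ) ∧
    ρ 1 0 = (starRingEnd ℂ) (ρ 0 1) ∧
    0 ≤ (ρ 0 0).re ∧ (ρ 0 0).re ≤ 1 ∧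
    Complex.normSq (ρ 0 1) ≤ (ρ 0 0).re * (1 - (ρ 0 0).re) := by
  obtain ⟨⟨hherm, hpsd⟩, htr⟩ := h
  have h00 : ρ 0 0 = ((ρ 0 0).re : ℂ) := by
    have := hherm.apply 0 0
    rw [Complex.star_def] at this
    exact ((Complex.conj_eq_iff_re).1 this).symm
  have h10 : ρ 1 0 = (starRingEnd ℂ) (ρ 0 1) := (hherm.apply 1 0).symm
  have htr2 : ρ 0 0 + ρ 1 1 = 1 := by
    have := htr; rwa [Matrix.trace_fin_two] at this
  have h11 : ρ 1 1 = ((1 - (ρ 0 0).re : ℝ) : ℂ) := by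
    push_cast; rw [← h00]; linear_combination htr2
  have hx0 : 0 ≤ (ρ 0 0).re := by
    have h1 := Matrix.PosSemidef.dotProduct_mulVec_nonneg (⟨hherm, hpsd⟩ : ρ.PosSemidef) ![1, 0]
    simp only [dotProduct, Matrix.mulVec, Fin.sum_univ_two, Pi.star_apply,
      Matrix.cons_val_zero, Matrix.cons_val_one, Matrix.head_cons, star_one, star_zero,
      mul_zero, mul_one, zero_mul, one_mul, add_zero, zero_add, dotProduct] at h1
    rw [h00] at h1
    exact Complex.zero_le_real.1 h1
  have hx1 : (ρ 0 0).re ≤ 1 := by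
    have h1 := Matrix.PosSemidef.dotProduct_mulVec_nonneg (⟨hherm, hpsd⟩ : ρ.PosSemidef) ![0, 1]
    simp only [dotProduct, Matrix.mulVec, Fin.sum_univ_two, Pi.star_apply,
      Matrix.cons_val_zero, Matrix.cons_val_one, Matrix.head_cons, star_one, star_zero,
      mul_zero, mul_one, zero_mul, one_mul, add_zero, zero_add, dotProduct] at h1
    rw [h11] at h1
    have := Complex.zero_le_real.1 h1
    linarith
  refine ⟨h00, h11, h10, hx0, hx1, ?_⟩
  have h1 := Matrix.PosSemidef.dotProduct_mulVec_nonneg (⟨hherm, hpsd⟩ : ρ.PosSemidef) ![ρ 1 1, -(ρ 1 0)]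
  have h2 := Matrix.PosSemidef.dotProduct_mulVec_nonneg (⟨hherm, hpsd⟩ : ρ.PosSemidef) ![-(ρ 0 1), ρ 0 0]
  simp only [dotProduct, Matrix.mulVec, Fin.sum_univ_two, Pi.star_apply,
    Matrix.cons_val_zero, Matrix.cons_val_one, Matrix.head_cons, star_neg,
    dotProduct] at h1 h2
  have hsum := add_nonneg h1 h2
  simp only [Complex.star_def] at hsum
  have hdet : (starRingEnd ℂ) (ρ 1 1) * (ρ 0 0 * ρ 1 1 + ρ 0 1 * -ρ 1 0) +
        -(starRingEnd ℂ) (ρ 1 0) * (ρ 1 0 * ρ 1 1 + ρ 1 1 * -ρ 1 0) +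
        (-(starRingEnd ℂ) (ρ 0 1) * (ρ 0 0 * -ρ 0 1 + ρ 0 1 * ρ 0 0) +
          (starRingEnd ℂ) (ρ 0 0) * (ρ 1 0 * -ρ 0 1 + ρ 1 1 * ρ 0 0)) =
      (((ρ 0 0).re * (1 - (ρ 0 0).re) - Complex.normSq (ρ 0 1) : ℝ) : ℂ) := by
    rw [h00, h10, h11]
    simp only [Complex.conj_conj, Complex.conj_ofReal]
    have hc := Complex.mul_conj (ρ 0 1)
    push_cast
    simp only [Complex.ofReal_re]
    linear_combination -hc
  rw [hdet] at hsum
  have := Complex.zero_le_real.1 hsum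
  linarith

lemma scalar_cert (p a b : ℝ) (hp0 : 0 ≤ p) (hp1 : p ≤ 1)
    (ha2 : 1/2 ≤ a) (ha1 : a ≤ 1) (hb2 : 1/2 ≤ b) (hb1 : b ≤ 1) :
    (2+p) * (1/5*(1+2*p) + 3/5*(2*p^2+a*b) - 3/10*(a+b+2*p)) ≤ 18/5 ∧
    ((2+p) * (1/5*(1+2*p) + 3/5*(2*p^2+a*b) - 3/10*(a+b+2*p)) = 18/5 ↔
      (p = 1 ∧ a = 1 ∧ b = 1)) := by
  have key : 18/5 - (2+p) * (1/5*(1+2*p) + 3/5*(2*p^2+a*b) - 3/10*(a+b+2*p)) =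
      ((2+p)*(1-(2*a-1)*(2*b-1)))*(3/20) + ((1-p)*(12*p^2+34*p+32))*(1/10) := by ring
  have ht : 0 ≤ 1-(2*a-1)*(2*b-1) := by
    have hfac : 0 ≤ (1-(2*a-1))*(2*b-1) := mul_nonneg (by linarith) (by linarith)
    have hexp : (1-(2*a-1))*(2*b-1) = (2*b-1) - (2*a-1)*(2*b-1) := by ring
    rw [hexp] at hfac; linarith
  have hQ : 0 < 12*p^2+34*p+32 := by nlinarith [sq_nonneg p]
  have hA : 0 ≤ (2+p)*(1-(2*a-1)*(2*b-1)) := mul_nonneg (by linarith) ht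
  have hB : 0 ≤ (1-p)*(12*p^2+34*p+32) := mul_nonneg (by linarith) (le_of_lt hQ)
  constructor
  · linarith
  constructor
  · intro heq
    rw [heq] at key
    have hz1 : (2+p)*(1-(2*a-1)*(2*b-1)) = 0 := by linarith
    have hz2 : (1-p) * (12*p^2+34*p+32) = 0 := by linarith
    have hp : p = 1 := by
      rcases mul_eq_zero.1 hz2 with h | h
      · linarith
      · linarith
    have hab : (2*a-1)*(2*b-1) = 1 := by
      rcases mul_eq_zero.1 hz1 with h | h
      · linarith
      · linarith
    have ha : a = 1 := by
      have hfa : 0 ≤ (2*a-1)*(1-(2*b-1)) := mul_nonneg (by linarith) (by linarith)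
      have hexp : (2*a-1)*(1-(2*b-1)) = (2*a-1) - (2*a-1)*(2*b-1) := by ring
      rw [hexp] at hfa
      linarith
    have hb : b = 1 := by
      have hfb : 0 ≤ (2*b-1)*(1-(2*a-1)) := mul_nonneg (by linarith) (by linarith)
      have hexp : (2*b-1)*(1-(2*a-1)) = (2*b-1) - (2*a-1)*(2*b-1) := by ring
      rw [hexp] at hfb
      linarith
    exact ⟨hp, ha, hb⟩
  · rintro ⟨e1, e2, e3⟩
    subst e1; subst e2; subst e3; norm_num

lemma p_bounds (x y X Y K : ℝ) (hx0 : 0 ≤ x) (hx1 : x ≤ 1) (hy0 : 0 ≤ y) (hy1 : y ≤ 1)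
    (hX0 : 0 ≤ X) (hY0 : 0 ≤ Y) (hdx : X ≤ x*(1-x)) (hdy : Y ≤ y*(1-y)) (hK : K^2 ≤ X*Y) :
    0 ≤ x*y + (1-x)*(1-y) + 2*K ∧ x*y + (1-x)*(1-y) + 2*K ≤ 1 := by
  have hxx : 0 ≤ x*(1-x) := mul_nonneg hx0 (by linarith)
  have hK2' : K^2 ≤ (x*(1-x))*(y*(1-y)) := le_trans hK (mul_le_mul hdx hdy hY0 hxx)
  constructor
  · have h4 : 4*K^2 ≤ (x*y + (1-x)*(1-y))^2 := by
      nlinarith [hK2', sq_nonneg (x*y - (1-x)*(1-y))]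
    have hS : 0 ≤ x*y + (1-x)*(1-y) :=
      add_nonneg (mul_nonneg hx0 hy0) (mul_nonneg (by linarith) (by linarith))
    nlinarith [h4, hS]
  · have h4 : 4*K^2 ≤ (x*(1-y) + y*(1-x))^2 := by
      nlinarith [hK2', sq_nonneg (x*(1-y) - y*(1-x))]
    have hT : 0 ≤ x*(1-y) + y*(1-x) :=
      add_nonneg (mul_nonneg hx0 (by linarith)) (mul_nonneg hy0 (by linarith))
    nlinarith [h4, hT]

lemma pure_reconstruct (ρ : Matrix (Fin 2) (Fin 2) ℂ) (x : ℝ)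
    (hr00 : ρ 0 0 = (x:ℂ)) (hr11 : ρ 1 1 = ((1-x : ℝ):ℂ))
    (hr10 : ρ 1 0 = (starRingEnd ℂ) (ρ 0 1)) (hx0 : 0 ≤ x)
    (hXv : Complex.normSq (ρ 0 1) = x*(1-x)) :
    ∃ ψ : Fin 2 → ℂ, (∑ i, ψ i * star (ψ i)) = 1 ∧ ρ = pureState ψ := by
  by_cases hx : x = 0
  · have hc0 : ρ 0 1 = 0 := by
      apply Complex.normSq_eq_zero.1
      rw [hXv, hx]; ring
    refine ⟨![0, 1], by simp [Fin.sum_univ_two], ?_⟩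
    rw [Matrix.eta_fin_two ρ, hr00, hr11, hr10, hc0, hx]
    rw [Matrix.eta_fin_two (pureState ![0,1])]
    simp [pureState]
  · have hxpos : 0 < x := lt_of_le_of_ne hx0 (Ne.symm hx)
    set s : ℂ := ((Real.sqrt x : ℝ):ℂ) with hsdef
    set cc : ℂ := ρ 0 1 with hccdef
    have hs2 : s * s = (x:ℂ) := by
      rw [hsdef, ← Complex.ofReal_mul, Real.mul_self_sqrt hx0]
    have hsne : s ≠ 0 := by
      rw [hsdef]
      simp only [ne_eq, Complex.ofReal_eq_zero]
      exact (Real.sqrt_ne_zero'.2 hxpos)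
    have hsstar : star s = s := by rw [hsdef, Complex.star_def, Complex.conj_ofReal]
    have hccx : (starRingEnd ℂ) cc * cc = ((x*(1-x) : ℝ) : ℂ) := by
      rw [mul_comm, Complex.mul_conj, hXv]
    have hxne : (x:ℂ) ≠ 0 := Complex.ofReal_ne_zero.2 hx
    refine ⟨![s, (starRingEnd ℂ) cc / s], ?_, ?_⟩
    · rw [Fin.sum_univ_two]
      simp only [Matrix.cons_val_zero, Matrix.cons_val_one, Matrix.head_cons,
        Complex.star_def, map_div₀, Complex.conj_conj]
      rw [show (starRingEnd ℂ) s = s from hsstar]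
      rw [div_mul_div_comm, hs2, hccx]
      push_cast
      field_simp
      ring
    · have e00 : s * star s = (x:ℂ) := by rw [hsstar, hs2]
      have hsconj : (starRingEnd ℂ) s = s := hsstar
      have e01 : s * star ((starRingEnd ℂ) cc / s) = cc := by
        rw [Complex.star_def, map_div₀, Complex.conj_conj, hsconj, mul_comm]
        exact div_mul_cancel₀ cc hsne
      have e10 : ((starRingEnd ℂ) cc / s) * star s = (starRingEnd ℂ) cc := by
        rw [hsstar]
        exact div_mul_cancel₀ _ hsne
      have e11 : ((starRingEnd ℂ) cc / s) * star ((starRingEnd ℂ) cc / s) = ((1-x : ℝ):ℂ) := by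
        rw [Complex.star_def, map_div₀, Complex.conj_conj, hsconj, div_mul_div_comm, hs2, hccx]
        push_cast
        field_simp
      rw [Matrix.eta_fin_two ρ, hr00, hr11, hr10]
      rw [Matrix.eta_fin_two (pureState ![s, (starRingEnd ℂ) cc / s])]
      show (!![(x:ℂ), cc; (starRingEnd ℂ) cc, ((1-x:ℝ):ℂ)] : Matrix (Fin 2) (Fin 2) ℂ) = _
      simp only [pureState, Matrix.cons_val_zero, Matrix.cons_val_one, Matrix.head_cons]
      rw [e00, e01, e10, e11]

lemma trace_pure_sq (ψ : Fin 2 → ℂ) (h : (∑ i, ψ i * star (ψ i)) = 1) :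
    Matrix.trace (pureState ψ * pureState ψ) = 1 := by
  rw [trace_mul_fin_two]
  rw [Fin.sum_univ_two] at h
  simp only [pureState]
  linear_combination (ψ 0 * star (ψ 0) + ψ 1 * star (ψ 1) + 1) * h


set_option maxHeartbeats 1000000 in
/-- For all single-qubit density operators `ρ, σ`,
`(2 + tr[ρσ]) · tr[R_{4,H}(ρ ⊗ σ ⊗ ρ ⊗ σ)] ≤ 18/5`, with equality exactly when
`ρ = σ` is a pure state. -/
theorem one_qubit_haar_certificate (ρ σ : Matrix (Fin 2) (Fin 2) ℂ)
    (hρ : IsDensity ρ) (hσ : IsDensity σ) :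
    (2 + Matrix.trace (ρ * σ)) * Matrix.trace (R4H * rep41 ρ σ) ≤ (18 : ℂ)/5 ∧
    ((2 + Matrix.trace (ρ * σ)) * Matrix.trace (R4H * rep41 ρ σ) = (18 : ℂ)/5 ↔
      (ρ = σ ∧ ∃ ψ : Fin 2 → ℂ, (∑ i, ψ i * star (ψ i)) = 1 ∧ ρ = pureState ψ)) := by
  obtain ⟨hr00, hr11, hr10, hx0, hx1, hdρ⟩ := density_entries ρ hρ
  obtain ⟨hs00, hs11, hs10, hy0, hy1, hdσ⟩ := density_entries σ hσ
  set x := (ρ 0 0).re with hxdef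
  set y := (σ 0 0).re with hydef
  set c := ρ 0 1 with hcdef
  set d := σ 0 1 with hddef
  set X := Complex.normSq c with hXdef
  set Y := Complex.normSq d with hYdef
  set K := (c * (starRingEnd ℂ) d).re with hKdef
  have hcc : c * (starRingEnd ℂ) c = (X : ℂ) := Complex.mul_conj c
  have hdd : d * (starRingEnd ℂ) d = (Y : ℂ) := Complex.mul_conj d
  have hcd2 : c * (starRingEnd ℂ) d + (starRingEnd ℂ) c * d = ((2*K : ℝ) : ℂ) := by
    have h2 : (starRingEnd ℂ) (c * (starRingEnd ℂ) d) = (starRingEnd ℂ) c * d := by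
      rw [_root_.map_mul, Complex.conj_conj]
    have h3 := Complex.add_conj (c * (starRingEnd ℂ) d)
    rw [h2] at h3
    exact_mod_cast h3
  -- trace values
  have hp : Matrix.trace (ρ*σ) = ((x*y + (1-x)*(1-y) + 2*K : ℝ) : ℂ) := by
    rw [trace_mul_fin_two, hr00, hs00, hr11, hs11, hr10, hs10]
    push_cast
    have e := hcd2; push_cast at e
    linear_combination e
  have ha : Matrix.trace (ρ*ρ) = ((x^2 + (1-x)^2 + 2*X : ℝ) : ℂ) := by
    rw [trace_mul_fin_two, hr00, hr11, hr10]
    push_cast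
    have e := hcc; push_cast at e
    linear_combination 2*e
  have hb : Matrix.trace (σ*σ) = ((y^2 + (1-y)^2 + 2*Y : ℝ) : ℂ) := by
    rw [trace_mul_fin_two, hs00, hs11, hs10]
    push_cast
    have e := hdd; push_cast at e
    linear_combination 2*e
  have hL : (2 + Matrix.trace (ρ * σ)) * Matrix.trace (R4H * rep41 ρ σ) =
      (((2+(x*y + (1-x)*(1-y) + 2*K)) *
        (1/5*(1+2*(x*y + (1-x)*(1-y) + 2*K))
          + 3/5*(2*(x*y + (1-x)*(1-y) + 2*K)^2
              + (x^2 + (1-x)^2 + 2*X)*(y^2 + (1-y)^2 + 2*Y))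
          - 3/10*((x^2 + (1-x)^2 + 2*X)+(y^2 + (1-y)^2 + 2*Y)
              + 2*(x*y + (1-x)*(1-y) + 2*K))) : ℝ) : ℂ) := by
    rw [key_trace, hρ.2, hσ.2, hp, ha, hb]
    push_cast
    ring
  -- real bounds
  have hX0 : 0 ≤ X := Complex.normSq_nonneg c
  have hY0 : 0 ≤ Y := Complex.normSq_nonneg d
  have hK2 : K^2 ≤ X*Y := by
    have h1 : Complex.normSq (c * (starRingEnd ℂ) d) = X*Y := by
      rw [Complex.normSq_mul, Complex.normSq_conj]
    have h2 : Complex.normSq (c * (starRingEnd ℂ) d)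
        = (c * (starRingEnd ℂ) d).re^2 + (c * (starRingEnd ℂ) d).im^2 := by
      rw [Complex.normSq_apply]; ring
    nlinarith [sq_nonneg ((c * (starRingEnd ℂ) d).im)]
  obtain ⟨hp0, hp1⟩ := p_bounds x y X Y K hx0 hx1 hy0 hy1 hX0 hY0 hdρ hdσ hK2
  have ha2 : 1/2 ≤ x^2 + (1-x)^2 + 2*X := by nlinarith [sq_nonneg (2*x-1)]
  have ha1 : x^2 + (1-x)^2 + 2*X ≤ 1 := by nlinarith [hdρ]
  have hb2 : 1/2 ≤ y^2 + (1-y)^2 + 2*Y := by nlinarith [sq_nonneg (2*y-1)]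
  have hb1 : y^2 + (1-y)^2 + 2*Y ≤ 1 := by nlinarith [hdσ]
  obtain ⟨hineq, hiff⟩ := scalar_cert (x*y + (1-x)*(1-y) + 2*K) (x^2 + (1-x)^2 + 2*X)
    (y^2 + (1-y)^2 + 2*Y) hp0 hp1 ha2 ha1 hb2 hb1
  have h185 : (18:ℂ)/5 = ((18/5 : ℝ) : ℂ) := by norm_num
  constructor
  · rw [hL, h185]
    exact Complex.real_le_real.2 hineq
  · rw [hL, h185, Complex.ofReal_inj, hiff]
    constructor
    · rintro ⟨hp1', ha1', hb1'⟩
      have hXv : X = x*(1-x) := by linear_combination ha1'/2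
      have hYv : Y = y*(1-y) := by linear_combination hb1'/2
      have hcdK : Complex.normSq (c-d) = X + Y - 2*K := by
        rw [hXdef, hYdef, hKdef]
        simp only [Complex.normSq_apply, Complex.sub_re, Complex.sub_im, Complex.mul_re,
          Complex.conj_re, Complex.conj_im]
        ring
      have hsq : (x-y)^2 + Complex.normSq (c - d) = 0 := by
        linear_combination (ha1' + hb1' - 2*hp1')/2 + hcdK
      have hxy : x = y := by
        have h1 : (x-y)^2 = 0 :=
          le_antisymm (by linarith [Complex.normSq_nonneg (c-d)]) (sq_nonneg _)
        have := pow_eq_zero_iff (n := 2) (by norm_num) |>.1 h1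
        linarith [sub_eq_zero.1 this]
      have hcd : c = d := by
        have h2 : Complex.normSq (c-d) = 0 := by linarith [sq_nonneg (x-y), Complex.normSq_nonneg (c-d)]
        exact sub_eq_zero.1 (Complex.normSq_eq_zero.1 h2)
      have hrs : ρ = σ := by
        rw [Matrix.eta_fin_two ρ, Matrix.eta_fin_two σ, hr00, hs00, hr11, hs11, hr10, hs10,
          hxy, hcd]
        rw [← hcdef, ← hddef, hcd]
      refine ⟨hrs, pure_reconstruct ρ x hr00 hr11 hr10 hx0 hXv⟩
    · rintro ⟨hrs, ψ, hnorm, hpure⟩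
      have htrr : Matrix.trace (ρ*ρ) = 1 := by rw [hpure]; exact trace_pure_sq ψ hnorm
      have e1 : ((x*y + (1-x)*(1-y) + 2*K : ℝ):ℂ) = ((1:ℝ):ℂ) := by
        rw [← hp, ← hrs, htrr]; norm_num
      have e2 : ((x^2 + (1-x)^2 + 2*X : ℝ):ℂ) = ((1:ℝ):ℂ) := by
        rw [← ha, htrr]; norm_num
      have e3 : ((y^2 + (1-y)^2 + 2*Y : ℝ):ℂ) = ((1:ℝ):ℂ) := by
        rw [← hb, ← hrs, htrr]; norm_num
      exact ⟨Complex.ofReal_inj.1 e1, Complex.ofReal_inj.1 e2, Complex.ofReal_inj.1 e3⟩
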